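/- Let v be a bad vertex of G with deg(v) = d ≥ 1. Then at least d/2 of the neighbors of v have degree at least d^{2(1−ε)}/4. -/

import Mathlib

/-- Let `v` be a bad vertex of `G` with `deg(v) = d ≥ 1`, i.e.
`∑_{u ∈ N(v)} deg(u)^{-1/2} < deg(v)^ε` with `ε = 1/40`. Then at least `d/2` of the neighbors
of `v` have degree at least `d^{2(1−ε)}/4 = d^{1.95}/4`. -/
theorem bad_vertex_many_high_degree_neighbors {V : Type*} [Fintype V] [DecidableEq V]
    (G : SimpleGraph V) [DecidableRel G.Adj]
    (v : V) (hdeg : 1 ≤ G.degree v)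
    (hbad : ∑ u ∈ G.neighborFinset v, (G.degree u : ℝ) ^ (-(1 : ℝ) / 2)
      < (G.degree v : ℝ) ^ ((1 : ℝ) / 40)) :
    (G.degree v : ℝ) / 2
      ≤ (((G.neighborFinset v).filter
          (fun u => (G.degree v : ℝ) ^ ((39 : ℝ) / 20) / 4 ≤ (G.degree u : ℝ))).card : ℝ) := by
  set d : ℝ := (G.degree v : ℝ) with hd
  have hd1 : (1:ℝ) ≤ d := by rw [hd]; exact_mod_cast hdeg
  have hd0 : (0:ℝ) < d := lt_of_lt_of_le one_pos hd1
  set B := (G.neighborFinset v).filter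
      (fun u => ¬ (d ^ ((39:ℝ)/20) / 4 ≤ (G.degree u : ℝ))) with hB
  have h4 : ((4:ℝ)) ^ ((1:ℝ)/2) = 2 := by
    rw [show (4:ℝ) = 2 ^ (2:ℕ) by norm_num, ← Real.rpow_natCast 2 2,
      ← Real.rpow_mul (by norm_num)]
    norm_num
  have heq : (d ^ ((39:ℝ)/20) / 4) ^ ((1:ℝ)/2) = d ^ ((39:ℝ)/40) / 2 := by
    rw [Real.div_rpow (by positivity) (by norm_num), h4, ← Real.rpow_mul hd0.le]
    norm_num
  have hpos : (0:ℝ) < d ^ ((39:ℝ)/40) / 2 := by positivity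
  have key : ∀ u ∈ B, (d ^ ((39:ℝ)/40) / 2)⁻¹ ≤ (G.degree u : ℝ) ^ (-(1:ℝ)/2) := by
    intro u hu
    rw [hB, Finset.mem_filter, SimpleGraph.mem_neighborFinset] at hu
    obtain ⟨hadj, hnP⟩ := hu
    have hdu0 : (0:ℝ) ≤ (G.degree u : ℝ) := by positivity
    have hlt : (G.degree u : ℝ) ≤ d ^ ((39:ℝ)/20) / 4 := (not_le.mp hnP).le
    have hmono : (G.degree u : ℝ) ^ ((1:ℝ)/2) ≤ d ^ ((39:ℝ)/40) / 2 := by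
      rw [← heq]
      exact Real.rpow_le_rpow hdu0 hlt (by norm_num)
    have hdu1 : (0:ℝ) < (G.degree u : ℝ) ^ ((1:ℝ)/2) := by
      have : 0 < G.degree u := G.degree_pos_iff_exists_adj u |>.mpr ⟨v, hadj.symm⟩
      have : (0:ℝ) < (G.degree u : ℝ) := by exact_mod_cast this
      positivity
    rw [show -(1:ℝ)/2 = -(1/2) by norm_num, Real.rpow_neg hdu0]
    exact inv_anti₀ hdu1 hmono
  have hsumB : (B.card : ℝ) * (d ^ ((39:ℝ)/40) / 2)⁻¹
      ≤ ∑ u ∈ B, (G.degree u : ℝ) ^ (-(1:ℝ)/2) := by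
    calc (B.card : ℝ) * (d ^ ((39:ℝ)/40) / 2)⁻¹
        = ∑ _u ∈ B, (d ^ ((39:ℝ)/40) / 2)⁻¹ := by
          rw [Finset.sum_const, nsmul_eq_mul]
      _ ≤ _ := Finset.sum_le_sum key
  have hsub : ∑ u ∈ B, (G.degree u : ℝ) ^ (-(1:ℝ)/2)
      ≤ ∑ u ∈ G.neighborFinset v, (G.degree u : ℝ) ^ (-(1:ℝ)/2) := by
    apply Finset.sum_le_sum_of_subset_of_nonneg (Finset.filter_subset _ _)
    intro u _ _
    positivity
  have hBlt : (B.card : ℝ) * (d ^ ((39:ℝ)/40) / 2)⁻¹ < d ^ ((1:ℝ)/40) :=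
    lt_of_le_of_lt (hsumB.trans hsub) hbad
  have hprod : d ^ ((1:ℝ)/40) * (d ^ ((39:ℝ)/40)) = d := by
    rw [← Real.rpow_add hd0]
    norm_num
  have hBcard : (B.card : ℝ) < d / 2 := by
    have := (mul_lt_mul_of_pos_right hBlt hpos)
    rw [mul_assoc, inv_mul_cancel₀ hpos.ne', mul_one, ← mul_div_assoc, hprod] at this
    exact this
  have hsplit := Finset.card_filter_add_card_filter_not
    (s := G.neighborFinset v)
    (p := fun u => d ^ ((39:ℝ)/20) / 4 ≤ (G.degree u : ℝ))
  rw [SimpleGraph.card_neighborFinset_eq_degree] at hsplit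
  have : (((G.neighborFinset v).filter
      (fun u => d ^ ((39:ℝ)/20) / 4 ≤ (G.degree u : ℝ))).card : ℝ) + (B.card : ℝ) = d := by
    rw [hB, hd]
    exact_mod_cast hsplit
  linarith
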